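/- arXiv:2507.02441 — 2 statements merged into one kernel-verified Lean document; each statement's English description precedes it below -/
import Mathlib

section
/- Let K be a field, V a K-vector space, and Q : V → K a quadratic form whose polar form B is nondegenerate. Let m ≥ 2 be a natural number. Let U₁, U₂, U₃ be totally singular subspaces of V of dimension m, and W₁, W₂ totally singular subspaces of dimension m+1 with U₁ ≤ W₁ and U₂ ≤ W₂. Assume: dim(W₁ ∩ W₂) = 1; dim(U₃ ∩ (U₁ + U₂)) = m − 1; U₁ ∩ U₂^⊥ = {0} (U₁ and U₂ are opposite); U₃ ∩ U₁^⊥ = {0} and U₃ ∩ U₂^⊥ = {0} (U₃ is opposite U₁ and U₂); and U₃ is not contained in (W₁ ∩ W₂)^⊥ (the point W₁ ∩ W₂ is not collinear with all of U₃). Then (U₃ + (W₂ ∩ U₃^⊥)) ∩ W₁ ≠ {0} if and only if m is even. (Equivalently: the image of W₂ under the upper projectivity U₂ ⋏ U₃ ⋏ U₁ equals W₁ if and only if the projective dimension m − 1 of the Uᵢ is odd.) -/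
/-- The perp of a subspace `S` with respect to the polar form of a quadratic form `Q`:
`S^⊥ = {v ∈ V | B(s,v) = 0 for all s ∈ S}`. -/
noncomputable def polarPerp {K V : Type*} [Field K] [AddCommGroup V] [Module K V]
    (Q : QuadraticForm K V) (S : Submodule K V) : Submodule K V :=
  LinearMap.BilinForm.orthogonal (QuadraticMap.polarBilin Q) S

/-- A subspace is totally singular for `Q` if `Q` vanishes identically on it. -/
def IsTotallySingular {K V : Type*} [Field K] [AddCommGroup V] [Module K V]
    (Q : QuadraticForm K V) (S : Submodule K V) : Prop :=
  ∀ v ∈ S, Q v = 0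

open Module Submodule LinearMap

universe u v

/-- An alternating bilinear form on a finite-dimensional space has even rank:
the corank of its radical has the same parity as the dimension. -/
lemma alt_even_corank {K : Type u} [Field K] (n : ℕ) :
    ∀ (M : Type v) [AddCommGroup M] [Module K M] [FiniteDimensional K M]
      (c : M →ₗ[K] M →ₗ[K] K), (∀ x, c x x = 0) → finrank K M = n →
      Even (n - finrank K (LinearMap.ker c.flip)) := by
  induction n using Nat.strong_induction_on with
  | _ n IH =>
    intro M _ _ _ c halt hrank
    have hskew : ∀ a b : M, c a b = - c b a := by
      intro a b
      have h := halt (a + b)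
      simp only [map_add, LinearMap.add_apply, halt a, halt b] at h
      linear_combination h
    by_cases hc : c = 0
    · have hker : LinearMap.ker c.flip = ⊤ := by
        rw [LinearMap.ker_eq_top]
        ext s h
        simp [hc]
      rw [hker]
      simp only [finrank_top, hrank, Nat.sub_self]
      exact ⟨0, rfl⟩
    · -- pick x y with c x y ≠ 0
      have hxy : ∃ x y : M, c x y ≠ 0 := by
        by_contra h
        push_neg at h
        exact hc (by ext a b; simp [h])
      obtain ⟨x, y, hxy⟩ := hxy
      set W : Submodule K M := LinearMap.ker (c x) ⊓ LinearMap.ker (c y) with hW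
      have hx0 : x ≠ 0 := by rintro rfl; simp at hxy
      have hy0 : y ≠ 0 := by rintro rfl; simp at hxy
      -- x, y linearly independent
      have hli : LinearIndependent K ![x, y] := by
        rw [LinearIndependent.pair_iff]
        intro s t hst
        have h1 : c (s • x + t • y) y = 0 := by rw [hst]; simp
        simp only [map_add, map_smul, LinearMap.add_apply, LinearMap.smul_apply, halt y, smul_eq_mul,
          mul_zero, add_zero] at h1
        have hs : s = 0 := by
          rcases mul_eq_zero.1 h1 with h | h
          · exact h
          · exact absurd h hxy
        subst hs
        have h2 : c x ((0:K) • x + t • y) = 0 := by rw [hst]; simp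
        simp only [zero_smul, zero_add, map_smul, smul_eq_mul] at h2
        rcases mul_eq_zero.1 h2 with h | h
        · exact ⟨rfl, h⟩
        · exact absurd h hxy
      set S : Submodule K M := Submodule.span K {x, y} with hS
      have hSrank : finrank K S = 2 := by
        have : ({x, y} : Set M) = Set.range ![x, y] := by
          ext z
          simp only [Set.mem_insert_iff, Set.mem_singleton_iff, Set.mem_range,
            Fin.exists_fin_two, Matrix.cons_val_zero, Matrix.cons_val_one, Matrix.head_cons]
          tauto
        rw [hS, this, finrank_span_eq_card hli]
        simp
      -- S ⊔ W = ⊤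
      have hsup : S ⊔ W = ⊤ := by
        rw [eq_top_iff]
        intro v _
        have hd : c x y ≠ 0 := hxy
        set d := c x y with hd'
        set α : K := - (c y v) / d with hα
        set β : K := (c x v) / d with hβ
        set w : M := v - α • x - β • y with hw'
        have hwW : w ∈ W := by
          constructor
          · show c x w = 0
            simp only [hw', map_sub, map_smul, smul_eq_mul, halt x]
            have hβd : β * c x y = c x v := by rw [hβ, ← hd']; exact div_mul_cancel₀ _ hd
            linear_combination -hβd
          · show c y w = 0
            have hyx : c y x = - d := by rw [hd']; exact hskew y x ▸ rfl
            simp only [hw', map_sub, map_smul, smul_eq_mul, halt y, hyx]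
            have hαd : α * d = -(c y v) := by rw [hα]; exact div_mul_cancel₀ _ hd
            linear_combination hαd
        have hv : v = (α • x + β • y) + w := by rw [hw']; abel
        rw [hv]
        exact Submodule.add_mem _
          (Submodule.mem_sup_left (Submodule.add_mem _
            (Submodule.smul_mem _ _ (Submodule.subset_span (by simp)))
            (Submodule.smul_mem _ _ (Submodule.subset_span (by simp)))))
          (Submodule.mem_sup_right hwW)
      -- S ⊓ W = ⊥
      have hinf : S ⊓ W = ⊥ := by
        rw [eq_bot_iff]
        rintro v ⟨hvS, hvW⟩
        obtain ⟨a, b, hab⟩ := Submodule.mem_span_pair.1 hvS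
        obtain ⟨hv1, hv2⟩ := hvW
        have h1 : c x v = 0 := hv1
        have h2 : c y v = 0 := hv2
        rw [← hab] at h1 h2
        simp only [map_add, map_smul, LinearMap.add_apply, LinearMap.smul_apply, smul_eq_mul, halt x, halt y,
          mul_zero, add_zero, zero_add] at h1 h2
        have hyx : c y x = - c x y := hskew y x
        rw [hyx] at h2
        have hb : b = 0 := by
          rcases mul_eq_zero.1 h1 with h | h
          · exact h
          · exact absurd h hxy
        have ha : a = 0 := by
          have : a * - c x y = 0 := h2
          rcases mul_eq_zero.1 this with h | h
          · exact h
          · exact absurd (neg_eq_zero.1 h) hxy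
        rw [← hab, ha, hb]
        simp
      have hrankW : finrank K W = n - 2 := by
        have := Submodule.finrank_sup_add_finrank_inf_eq S W
        rw [hsup, hinf, hSrank] at this
        simp only [finrank_top, finrank_bot, add_zero] at this
        omega
      have h2n : 2 ≤ n := by
        have := Submodule.finrank_le S
        omega
      -- restricted form
      set cW : ↥W →ₗ[K] ↥W →ₗ[K] K := LinearMap.domRestrict₁₂ c W W with hcW
      have haltW : ∀ w : ↥W, cW w w = 0 := fun w => halt w
      have hIH := IH (n - 2) (by omega) ↥W cW haltW hrankW
      -- radical correspondence
      have hradeq : LinearMap.ker c.flip = Submodule.map W.subtype (LinearMap.ker cW.flip) := by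
        ext s
        constructor
        · intro hs
          have hs' : ∀ h : M, c h s = 0 := fun h => by
            have := LinearMap.congr_fun (LinearMap.mem_ker.1 hs) h
            simpa using this
          have hsW : s ∈ W := ⟨hs' x, hs' y⟩
          refine ⟨⟨s, hsW⟩, LinearMap.mem_ker.2 ?_, rfl⟩
          ext w
          exact hs' w
        · rintro ⟨⟨s, hsW⟩, hs, rfl⟩
          simp only [LinearMap.mem_ker] at hs ⊢
          ext h
          have hsw : ∀ w : ↥W, c (w : M) s = 0 := fun w => by
            have := LinearMap.congr_fun hs w
            simpa [hcW, LinearMap.domRestrict₁₂_apply] using this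
          -- show c h s = 0 for all h using h ∈ S ⊔ W = ⊤
          have hmem : h ∈ S ⊔ W := hsup ▸ Submodule.mem_top
          have : S ⊔ W ≤ LinearMap.ker (c.flip s) := by
            apply sup_le
            · rw [Submodule.span_le]
              rintro z (rfl | rfl)
              · exact hsW.1
              · exact hsW.2
            · intro w hw
              exact hsw ⟨w, hw⟩
          exact this hmem
      have hfr : finrank K (LinearMap.ker c.flip) = finrank K (LinearMap.ker cW.flip) := by
        rw [hradeq]
        exact (Submodule.finrank_map_subtype_eq W _)
      rw [hfr]
      have hle : finrank K (LinearMap.ker cW.flip) ≤ n - 2 := by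
        have := Submodule.finrank_le (LinearMap.ker cW.flip)
        omega
      simp only [Nat.even_iff] at hIH ⊢
      omega

/-- If `A ≤ B`, `w ∈ B ∖ A` and `dim B ≤ dim A + 1`, then `B = A ⊔ ⟨w⟩`. -/
lemma ext_by_point {K : Type u} {V : Type v} [Field K] [AddCommGroup V] [Module K V]
    {A B : Submodule K V} [FiniteDimensional K B] {w : V} (hw : w ∈ B) (hwA : w ∉ A)
    (hAB : A ≤ B) (hrk : Module.finrank K B ≤ Module.finrank K A + 1) :
    B = A ⊔ Submodule.span K {w} := by
  haveI : FiniteDimensional K A := Submodule.finiteDimensional_of_le hAB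
  have hw0 : w ≠ 0 := fun h => hwA (h ▸ A.zero_mem)
  have hle : A ⊔ Submodule.span K {w} ≤ B :=
    sup_le hAB ((Submodule.span_singleton_le_iff_mem _ _).2 hw)
  have hinf : A ⊓ Submodule.span K {w} = ⊥ := by
    rw [eq_bot_iff]
    rintro v ⟨hv1, hv2⟩
    obtain ⟨a, rfl⟩ := Submodule.mem_span_singleton.1 hv2
    rcases eq_or_ne a 0 with rfl | ha
    · simp
    · exact absurd (by simpa [ha] using A.smul_mem a⁻¹ hv1) hwA
  have hfin : finrank K ↥(A ⊔ Submodule.span K {w}) = finrank K A + 1 := by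
    have h := Submodule.finrank_sup_add_finrank_inf_eq A (Submodule.span K {w})
    rw [hinf, finrank_span_singleton hw0] at h
    simpa using h
  exact (Submodule.eq_of_le_of_finrank_le hle (by omega)).symm

set_option maxHeartbeats 2000000 in
theorem upper_projectivity_image_iff_even'
    {K V : Type*} [Field K] [AddCommGroup V] [Module K V]
    (Q : QuadraticForm K V)
    (hnd : ∀ v : V, (∀ w : V, QuadraticMap.polar (⇑Q) v w = 0) → v = 0)
    (m : ℕ) (hm : 2 ≤ m)
    (U₁ U₂ U₃ W₁ W₂ : Submodule K V)
    (hU₁ts : ∀ v ∈ U₁, Q v = 0) (hU₂ts : ∀ v ∈ U₂, Q v = 0)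
    (hU₃ts : ∀ v ∈ U₃, Q v = 0)
    (hW₁ts : ∀ v ∈ W₁, Q v = 0) (hW₂ts : ∀ v ∈ W₂, Q v = 0)
    (hU₁ : Module.finrank K U₁ = m) (hU₂ : Module.finrank K U₂ = m)
    (hU₃ : Module.finrank K U₃ = m)
    (hW₁ : Module.finrank K W₁ = m + 1) (hW₂ : Module.finrank K W₂ = m + 1)
    (hUW₁ : U₁ ≤ W₁) (hUW₂ : U₂ ≤ W₂)
    (hmeet : Module.finrank K ↥(W₁ ⊓ W₂) = 1)
    (hU₃meet : Module.finrank K ↥(U₃ ⊓ (U₁ ⊔ U₂)) = m - 1)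
    (hopp12 : U₁ ⊓ LinearMap.BilinForm.orthogonal (QuadraticMap.polarBilin Q) U₂ = ⊥)
    (hopp31 : U₃ ⊓ LinearMap.BilinForm.orthogonal (QuadraticMap.polarBilin Q) U₁ = ⊥)
    (hopp32 : U₃ ⊓ LinearMap.BilinForm.orthogonal (QuadraticMap.polarBilin Q) U₂ = ⊥)
    (hnotcoll : ¬ U₃ ≤ LinearMap.BilinForm.orthogonal (QuadraticMap.polarBilin Q) (W₁ ⊓ W₂)) :
    (U₃ ⊔ (W₂ ⊓ LinearMap.BilinForm.orthogonal (QuadraticMap.polarBilin Q) U₃)) ⊓ W₁ ≠ ⊥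
      ↔ Even m := by
  set Bb : V →ₗ[K] V →ₗ[K] K := QuadraticMap.polarBilin Q with hBbdef
  -- basic facts about the polar form
  have hBb_apply : ∀ a b : V, Bb a b = Q (a + b) - Q a - Q b := by
    intro a b
    simp [hBbdef, QuadraticMap.polarBilin_apply_apply, QuadraticMap.polar]
  have hsymm : ∀ a b : V, Bb a b = Bb b a := by
    intro a b; rw [hBb_apply, hBb_apply, add_comm a b]; ring
  have tsB : ∀ {S : Submodule K V}, (∀ v ∈ S, Q v = 0) → ∀ {a b : V}, a ∈ S → b ∈ S →
      Bb a b = 0 := by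
    intro S hS a b ha hb
    rw [hBb_apply, hS _ (S.add_mem ha hb), hS _ ha, hS _ hb]
    ring
  have hmemperp : ∀ (S : Submodule K V) (v : V),
      v ∈ LinearMap.BilinForm.orthogonal Bb S ↔ ∀ s ∈ S, Bb s v = 0 := fun S v => Iff.rfl
  -- finite dimensionality
  haveI : FiniteDimensional K U₁ := Module.finite_of_finrank_pos (by omega)
  haveI : FiniteDimensional K U₂ := Module.finite_of_finrank_pos (by omega)
  haveI : FiniteDimensional K U₃ := Module.finite_of_finrank_pos (by omega)
  haveI : FiniteDimensional K W₁ := Module.finite_of_finrank_pos (by omega)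
  haveI : FiniteDimensional K W₂ := Module.finite_of_finrank_pos (by omega)
  haveI : FiniteDimensional K ↥(W₁ ⊓ W₂) := Submodule.finiteDimensional_of_le inf_le_left
  -- the subspaces W are inside the perps of the U's they contain
  have hW₁perpU₁ : W₁ ≤ LinearMap.BilinForm.orthogonal Bb U₁ := by
    intro w hw
    exact (hmemperp _ _).2 fun s hs => tsB hW₁ts (hUW₁ hs) hw
  have hW₂perpU₂ : W₂ ≤ LinearMap.BilinForm.orthogonal Bb U₂ := by
    intro w hw
    exact (hmemperp _ _).2 fun s hs => tsB hW₂ts (hUW₂ hs) hw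
  have hU₁W₂ : U₁ ⊓ W₂ = ⊥ := by
    rw [eq_bot_iff, ← hopp12]
    exact inf_le_inf_left _ hW₂perpU₂
  -- symmetric nondegeneracy of the pairing between U₁ and U₂
  have hU₂perpU₁ : U₂ ⊓ LinearMap.BilinForm.orthogonal Bb U₁ = ⊥ := by
    set g : ↥U₁ →ₗ[K] Module.Dual K ↥U₂ := LinearMap.domRestrict₁₂ Bb U₁ U₂ with hg
    have hginj : Function.Injective g := by
      rw [← LinearMap.ker_eq_bot, eq_bot_iff]
      rintro u hu
      have hu' : ∀ s : ↥U₂, Bb (u : V) (s : V) = 0 := fun s => by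
        have := LinearMap.congr_fun (LinearMap.mem_ker.1 hu) s
        simpa [hg, LinearMap.domRestrict₁₂_apply] using this
      have : (u : V) ∈ U₁ ⊓ LinearMap.BilinForm.orthogonal Bb U₂ :=
        ⟨u.2, (hmemperp _ _).2 fun s hs => by rw [hsymm]; exact hu' ⟨s, hs⟩⟩
      rw [hopp12] at this
      simpa [Submodule.mem_bot] using Subtype.ext ((Submodule.mem_bot K).1 this)
    have hgsurj : Function.Surjective g := by
      have heq : finrank K ↥U₁ = finrank K (Module.Dual K ↥U₂) := by
        rw [Subspace.dual_finrank_eq, hU₁, hU₂]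
      exact (LinearMap.injective_iff_surjective_of_finrank_eq_finrank heq).1 hginj
    rw [eq_bot_iff]
    rintro s ⟨hs1, hs2⟩
    rw [Submodule.mem_bot]
    by_contra hs0
    have : (⟨s, hs1⟩ : ↥U₂) ≠ 0 := fun h => hs0 (congrArg Subtype.val h)
    obtain ⟨φ, hφ⟩ : ∃ φ : Module.Dual K ↥U₂, φ ⟨s, hs1⟩ ≠ 0 := by
      by_contra h
      push_neg at h
      exact this ((Module.forall_dual_apply_eq_zero_iff K _).1 h)
    obtain ⟨u, rfl⟩ := hgsurj φ
    exact hφ (((hmemperp _ _).1 hs2) u u.2)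
  have hU₂W₁ : U₂ ⊓ W₁ = ⊥ := by
    rw [eq_bot_iff, ← hU₂perpU₁]
    exact inf_le_inf_left _ hW₁perpU₁
  -- the point p spanning W₁ ⊓ W₂
  obtain ⟨p, hpmem, hp0⟩ : ∃ p, p ∈ W₁ ⊓ W₂ ∧ p ≠ 0 := by
    apply Submodule.exists_mem_ne_zero_of_ne_bot
    intro h
    rw [h] at hmeet
    simp at hmeet
  have hpW : W₁ ⊓ W₂ = Submodule.span K {p} := by
    have hle : Submodule.span K {p} ≤ W₁ ⊓ W₂ := (Submodule.span_singleton_le_iff_mem _ _).2 hpmem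
    exact (Submodule.eq_of_le_of_finrank_le hle (by rw [hmeet, finrank_span_singleton hp0])).symm
  have hpW₁ : p ∈ W₁ := hpmem.1
  have hpW₂ : p ∈ W₂ := hpmem.2
  have hpU₁ : p ∉ U₁ := fun h => hp0 ((Submodule.mem_bot K).1 (hU₁W₂ ▸ ⟨h, hpW₂⟩))
  have hpU₂ : p ∉ U₂ := fun h => hp0 ((Submodule.mem_bot K).1 (hU₂W₁ ▸ ⟨h, hpW₁⟩))
  have hW₁eq : W₁ = U₁ ⊔ Submodule.span K {p} :=
    ext_by_point hpW₁ hpU₁ hUW₁ (by rw [hW₁, hU₁])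
  have hW₂eq : W₂ = U₂ ⊔ Submodule.span K {p} :=
    ext_by_point hpW₂ hpU₂ hUW₂ (by rw [hW₂, hU₂])
  -- the point p is not collinear with all of U₃ : get u ∈ U₃ with Bb p u ≠ 0
  obtain ⟨u, huU₃, hBpu⟩ : ∃ u ∈ U₃, Bb p u ≠ 0 := by
    obtain ⟨u, huU₃, hu⟩ := SetLike.not_le_iff_exists.1 hnotcoll
    rw [hmemperp] at hu
    push_neg at hu
    obtain ⟨n, hn, hn0⟩ := hu
    rw [hpW, Submodule.mem_span_singleton] at hn
    obtain ⟨a, rfl⟩ := hn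
    refine ⟨u, huU₃, fun h => hn0 ?_⟩
    rw [map_smul]
    simp [h]
  -- the hyperplane H of U₃
  set H : Submodule K V := U₃ ⊓ (U₁ ⊔ U₂) with hHdef
  haveI : FiniteDimensional K H := Submodule.finiteDimensional_of_le inf_le_left
  have hHleU₃ : H ≤ U₃ := inf_le_left
  have hHle12 : H ≤ U₁ ⊔ U₂ := inf_le_right
  have hU₁₂ : U₁ ⊓ U₂ = ⊥ := by
    rw [eq_bot_iff, ← hopp12]
    exact inf_le_inf_left _ fun z hz => (hmemperp _ _).2 fun s hs => tsB hU₂ts hs hz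
  -- p is orthogonal to U₁ ⊔ U₂ and H = U₃ ⊓ p^⊥
  have hBp₁ : ∀ x ∈ U₁, Bb p x = 0 := fun x hx => tsB hW₁ts hpW₁ (hUW₁ hx)
  have hBp₂ : ∀ z ∈ U₂, Bb p z = 0 := fun z hz => tsB hW₂ts hpW₂ (hUW₂ hz)
  have hBp₁₂ : ∀ h ∈ U₁ ⊔ U₂, Bb p h = 0 := by
    intro h hh
    obtain ⟨x, hx, z, hz, rfl⟩ := Submodule.mem_sup.1 hh
    rw [map_add, hBp₁ x hx, hBp₂ z hz, add_zero]
  have hHp : ∀ h ∈ H, Bb p h = 0 := fun h hh => hBp₁₂ h (hHle12 hh)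
  have hHeq : ∀ s ∈ U₃, Bb p s = 0 → s ∈ H := by
    intro s hs hBps
    set H' : Submodule K V := U₃ ⊓ LinearMap.ker (Bb p) with hH'
    haveI : FiniteDimensional K H' := Submodule.finiteDimensional_of_le inf_le_left
    have hH'le : H ≤ H' := le_inf hHleU₃ fun h hh => LinearMap.mem_ker.2 (hHp h hh)
    have hH'lt : H' < U₃ := by
      refine lt_of_le_of_ne inf_le_left fun h => ?_
      have : u ∈ H' := h ▸ huU₃
      exact hBpu (LinearMap.mem_ker.1 this.2)
    have hH'fin : finrank K H' < m := hU₃ ▸ Submodule.finrank_lt_finrank_of_lt hH'lt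
    have : H = H' := Submodule.eq_of_le_of_finrank_le hH'le (by omega)
    exact this ▸ (⟨hs, LinearMap.mem_ker.2 hBps⟩ : s ∈ H')
  have huH : u ∉ H := fun h => hBpu (hHp u h)
  have hU₃eq : U₃ = H ⊔ Submodule.span K {u} :=
    ext_by_point huU₃ huH hHleU₃ (by rw [hU₃, hU₃meet]; omega)
  -- projection π of V onto U₁ killing U₂
  obtain ⟨D, hD⟩ := Submodule.exists_isCompl (U₁ ⊔ U₂)
  have hcompl : IsCompl U₁ (U₂ ⊔ D) := by
    constructor
    · rw [disjoint_iff]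
      rw [eq_bot_iff]
      rintro v ⟨hv1, hv2⟩
      obtain ⟨z, hz, d, hd, hzd⟩ := Submodule.mem_sup.1 hv2
      have hdmem : d ∈ (U₁ ⊔ U₂) ⊓ D :=
        ⟨by
          have : d = v - z := by rw [← hzd]; abel
          rw [this]
          exact Submodule.sub_mem _ (Submodule.mem_sup_left hv1) (Submodule.mem_sup_right hz),
         hd⟩
      rw [hD.disjoint.eq_bot] at hdmem
      have hd0 : d = 0 := (Submodule.mem_bot K).1 hdmem
      have : v ∈ U₁ ⊓ U₂ := ⟨hv1, by rw [← hzd, hd0, add_zero]; exact hz⟩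
      rw [hU₁₂] at this
      exact this
    · rw [codisjoint_iff, ← sup_assoc]
      exact hD.codisjoint.eq_top
  set π : V →ₗ[K] V := U₁.subtype ∘ₗ (U₁.projectionOnto (U₂ ⊔ D) hcompl) with hπdef
  have hπmem : ∀ v : V, π v ∈ U₁ := fun v => ((U₁.projectionOnto (U₂ ⊔ D) hcompl) v).2
  have hπ₁ : ∀ x ∈ U₁, π x = x := by
    intro x hx
    show (U₁.subtype ((U₁.projectionOnto (U₂ ⊔ D) hcompl) x) : V) = x
    rw [show x = ((⟨x, hx⟩ : ↥U₁) : V) from rfl, Submodule.projectionOnto_apply_left]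
    rfl
  have hπ₂ : ∀ z ∈ U₂, π z = 0 := by
    intro z hz
    show (U₁.subtype ((U₁.projectionOnto (U₂ ⊔ D) hcompl) z) : V) = 0
    rw [Submodule.projectionOnto_apply_of_mem_right hcompl (Submodule.mem_sup_left hz)]
    simp
  have hπsub : ∀ h ∈ U₁ ⊔ U₂, h - π h ∈ U₂ := by
    intro h hh
    obtain ⟨x, hx, z, hz, rfl⟩ := Submodule.mem_sup.1 hh
    rw [map_add, hπ₁ x hx, hπ₂ z hz, add_zero]
    simpa using hz
  -- X₁, the projection of H into U₁
  set X₁ : Submodule K V := Submodule.map π H with hX₁def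
  have hX₁U₁ : X₁ ≤ U₁ := by
    rintro x ⟨h, hh, rfl⟩
    exact hπmem h
  have hHU₂bot : ∀ h ∈ H, h ∈ U₂ → h = 0 := by
    intro h hhH hh2
    have : h ∈ U₃ ⊓ LinearMap.BilinForm.orthogonal Bb U₂ :=
      ⟨hHleU₃ hhH, (hmemperp _ _).2 fun s hs => tsB hU₂ts hs hh2⟩
    rw [hopp32] at this
    exact (Submodule.mem_bot K).1 this
  have hπinjH : ∀ h ∈ H, π h = 0 → h = 0 := by
    intro h hh hπh
    apply hHU₂bot h hh
    have := hπsub h (hHle12 hh)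
    rwa [hπh, sub_zero] at this
  have hX₁rank : finrank K X₁ = m - 1 := by
    set f : ↥H →ₗ[K] V := π ∘ₗ H.subtype with hf
    have hker : LinearMap.ker f = ⊥ := by
      rw [eq_bot_iff]
      intro x hx
      have : (x : V) = 0 := hπinjH _ x.2 (LinearMap.mem_ker.1 hx)
      simpa [Submodule.mem_bot] using Subtype.ext this
    have hrange : LinearMap.range f = X₁ := by
      rw [hf, LinearMap.range_comp, Submodule.range_subtype]
    have := LinearMap.finrank_range_add_finrank_ker f
    rw [hker, hrange, finrank_bot, add_zero, hU₃meet] at this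
    exact this
  -- a vector e of U₁ outside X₁
  have hX₁lt : X₁ < U₁ := by
    refine lt_of_le_of_ne hX₁U₁ fun h => ?_
    rw [h, hU₁] at hX₁rank
    omega
  obtain ⟨e, heU₁, heX₁⟩ := SetLike.exists_of_lt hX₁lt
  have hU₁X₁e : U₁ = X₁ ⊔ Submodule.span K {e} := by
    haveI : FiniteDimensional K X₁ := Submodule.finiteDimensional_of_le hX₁U₁
    exact ext_by_point heU₁ heX₁ hX₁U₁ (by rw [hU₁, hX₁rank]; omega)
  -- the alternating form c on H
  set c : ↥H →ₗ[K] ↥H →ₗ[K] K := LinearMap.domRestrict₁₂ (Bb ∘ₗ π) H H with hcdef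
  have hc_apply : ∀ h s : ↥H, c h s = Bb (π (h : V)) (s : V) := fun h s => rfl
  have halt : ∀ h : ↥H, c h h = 0 := by
    intro h
    have hhH : (h : V) ∈ H := h.2
    have hQx : Q (π (h : V)) = 0 := hU₁ts _ (hπmem _)
    have hQh : Q (h : V) = 0 := hU₃ts _ (hHleU₃ hhH)
    have hQz : Q ((h : V) - π (h : V)) = 0 := hU₂ts _ (hπsub _ (hHle12 hhH))
    have hsplit : (h : V) = π (h : V) + ((h : V) - π (h : V)) := by abel
    have hBmerge : Bb (π (h : V)) (π (h : V) + ((h : V) - π (h : V))) = Bb (π (h : V)) (h : V) := by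
      congr 1
      abel
    rw [hc_apply, ← hBmerge, map_add, hBb_apply, hBb_apply]
    have hmer : π (h : V) + ((h : V) - π (h : V)) = (h : V) := by abel
    rw [hmer, hQx, hQh, hQz]
    have h2 : Q (π (h : V) + π (h : V)) = 0 :=
      hU₁ts _ (U₁.add_mem (hπmem _) (hπmem _))
    rw [h2]
    ring
  -- the radical of c
  set rad : Submodule K ↥H := LinearMap.ker c.flip with hraddef
  have hradmem : ∀ s : ↥H, s ∈ rad ↔ ∀ h : ↥H, Bb (π (h : V)) (s : V) = 0 := by
    intro s
    constructor
    · intro hs h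
      have := LinearMap.congr_fun (LinearMap.mem_ker.1 hs) h
      simpa [hc_apply] using this
    · intro hs
      refine LinearMap.mem_ker.2 ?_
      ext h
      simpa [hc_apply] using hs h
  -- the radical has dimension at most 1
  have hradle : finrank K ↥rad ≤ 1 := by
    set θ : ↥rad →ₗ[K] K := (Bb e) ∘ₗ (H.subtype ∘ₗ rad.subtype) with hθ
    have hinj : Function.Injective θ := by
      rw [← LinearMap.ker_eq_bot, eq_bot_iff]
      intro s hs
      have hθs : Bb e ((s : ↥H) : V) = 0 := LinearMap.mem_ker.1 hs
      have hsU₃ : ((s : ↥H) : V) ∈ U₃ := hHleU₃ (s : ↥H).2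
      have hperps : ((s : ↥H) : V) ∈ LinearMap.BilinForm.orthogonal Bb U₁ := by
        refine (hmemperp _ _).2 fun n hn => ?_
        rw [hU₁X₁e] at hn
        obtain ⟨ξ, hξ, w, hw, rfl⟩ := Submodule.mem_sup.1 hn
        obtain ⟨a, rfl⟩ := Submodule.mem_span_singleton.1 hw
        obtain ⟨h, hh, rfl⟩ := hξ
        rw [map_add, LinearMap.add_apply, map_smul, LinearMap.smul_apply, hθs,
          (hradmem (s : ↥H)).1 s.2 ⟨h, hh⟩]
        simp
      have : ((s : ↥H) : V) ∈ U₃ ⊓ LinearMap.BilinForm.orthogonal Bb U₁ := ⟨hsU₃, hperps⟩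
      rw [hopp31] at this
      have h0 : ((s : ↥H) : V) = 0 := (Submodule.mem_bot K).1 this
      have : (s : ↥H) = 0 := Subtype.ext h0
      simpa [Submodule.mem_bot] using Subtype.ext this
    calc finrank K ↥rad ≤ finrank K K := LinearMap.finrank_le_finrank_of_injective hinj
      _ = 1 := finrank_self K
  -- parity of the radical
  have hevenrank := alt_even_corank (m - 1) ↥H c halt hU₃meet
  rw [← hraddef] at hevenrank
  have key3 : rad ≠ ⊥ ↔ Even m := by
    rw [Ne, ← Submodule.finrank_eq_zero (S := rad)]
    have h1 : finrank K ↥rad ≤ m - 1 := by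
      have := Submodule.finrank_le rad
      rw [hU₃meet] at this
      exact this
    rw [Nat.even_iff] at hevenrank ⊢
    omega
  -- KEY 1: nontrivial intersection implies nontrivial radical
  have key1 : (U₃ ⊔ (W₂ ⊓ LinearMap.BilinForm.orthogonal Bb U₃)) ⊓ W₁ ≠ ⊥ → rad ≠ ⊥ := by
    intro hne
    obtain ⟨v, hv, hv0⟩ := Submodule.exists_mem_ne_zero_of_ne_bot hne
    obtain ⟨hvsup, hvW₁⟩ := hv
    obtain ⟨s, hsU₃, q, hq, hsq⟩ := Submodule.mem_sup.1 hvsup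
    obtain ⟨hqW₂, hqperp⟩ := hq
    have hq_perp : ∀ n ∈ U₃, Bb n q = 0 := (hmemperp _ _).1 hqperp
    have hBpv : Bb p v = 0 := tsB hW₁ts hpW₁ hvW₁
    have hBpq : Bb p q = 0 := tsB hW₂ts hpW₂ hqW₂
    have hBps : Bb p s = 0 := by
      have h1 : Bb p (s + q) = 0 := by rw [hsq]; exact hBpv
      rw [map_add, hBpq, add_zero] at h1
      exact h1
    have hsH : s ∈ H := hHeq s hsU₃ hBps
    have hqmem : q ∈ U₂ ⊔ Submodule.span K {p} := hW₂eq ▸ hqW₂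
    obtain ⟨b, hb, w, hw, hbw⟩ := Submodule.mem_sup.1 hqmem
    obtain ⟨γ, rfl⟩ := Submodule.mem_span_singleton.1 hw
    have hxU₁ : π s ∈ U₁ := hπmem s
    have hzU₂ : s - π s ∈ U₂ := hπsub s (hHle12 hsH)
    have hzbW₁ : (s - π s) + b ∈ W₁ := by
      have heq : (s - π s) + b = v - π s - γ • p := by rw [← hsq, ← hbw]; abel
      rw [heq]
      exact Submodule.sub_mem _ (Submodule.sub_mem _ hvW₁ (hUW₁ hxU₁))
        (Submodule.smul_mem _ _ hpW₁)
    have hzb0 : (s - π s) + b = 0 := by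
      have : (s - π s) + b ∈ U₂ ⊓ W₁ := ⟨U₂.add_mem hzU₂ hb, hzbW₁⟩
      rw [hU₂W₁] at this
      exact (Submodule.mem_bot K).1 this
    have hbeq : b = -(s - π s) := by
      have h := hzb0
      have : b = -(s - π s) + ((s - π s) + b) := by abel
      rw [this, h, add_zero]
    have hs0 : s ≠ 0 := by
      rintro rfl
      have hπ0 : π (0 : V) = (0 : V) := map_zero π
      have hb0 : b = 0 := by rw [hbeq, hπ0]; simp
      have hveq : v = γ • p := by rw [← hsq, ← hbw, hb0]; simp
      have hγ : γ ≠ 0 := fun h => hv0 (by rw [hveq, h, zero_smul])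
      have hup := hq_perp u huU₃
      rw [← hbw, hb0, zero_add, map_smul, smul_eq_mul] at hup
      rcases mul_eq_zero.1 hup with h | h
      · exact hγ h
      · exact hBpu (by rw [hsymm]; exact h)
    have hsrad : (⟨s, hsH⟩ : ↥H) ∈ rad := by
      rw [hradmem]
      intro h
      have h1 : Bb (π ((h : ↥H) : V)) v = 0 := tsB hW₁ts (hUW₁ (hπmem _)) hvW₁
      have h2 : Bb ((h : ↥H) : V) q = 0 := hq_perp _ (hHleU₃ h.2)
      have h3 : Bb (((h : ↥H) : V) - π ((h : ↥H) : V)) q = 0 := by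
        rw [← hbw, map_add]
        have h3a : Bb (((h : ↥H) : V) - π ((h : ↥H) : V)) b = 0 := by
          rw [hbeq, map_neg, tsB hU₂ts (hπsub _ (hHle12 h.2)) hzU₂, neg_zero]
        have h3b : Bb (((h : ↥H) : V) - π ((h : ↥H) : V)) (γ • p) = 0 := by
          rw [map_smul, tsB hW₂ts (hUW₂ (hπsub _ (hHle12 h.2))) hpW₂, smul_zero]
        rw [h3a, h3b, add_zero]
      have h4 : Bb (π ((h : ↥H) : V)) q = 0 := by
        have heq2 : π ((h : ↥H) : V) = ((h : ↥H) : V) - (((h : ↥H) : V) - π ((h : ↥H) : V)) := by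
          abel
        rw [heq2, map_sub, LinearMap.sub_apply, h2, h3, sub_zero]
      have h5 : Bb (π ((h : ↥H) : V)) s = Bb (π ((h : ↥H) : V)) v - Bb (π ((h : ↥H) : V)) q := by
        rw [← hsq, map_add]
        ring
      rw [h5, h1, h4, sub_zero]
    rw [Submodule.ne_bot_iff]
    exact ⟨⟨s, hsH⟩, hsrad, fun h => hs0 (congrArg Subtype.val h)⟩
  -- KEY 2: nontrivial radical implies nontrivial intersection
  have key2 : rad ≠ ⊥ → (U₃ ⊔ (W₂ ⊓ LinearMap.BilinForm.orthogonal Bb U₃)) ⊓ W₁ ≠ ⊥ := by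
    intro hrad
    obtain ⟨st, hstrad, hst0⟩ := (Submodule.ne_bot_iff rad).1 hrad
    have hsH : (st : V) ∈ H := st.2
    set s : V := (st : V) with hs
    have hs0 : s ≠ 0 := fun h => hst0 (Subtype.ext h)
    have hradB : ∀ h ∈ H, Bb (π h) s = 0 := fun h hh => (hradmem st).1 hstrad ⟨h, hh⟩
    have ht : Bb p u ≠ 0 := hBpu
    set γ : K := (Bb p u)⁻¹ * Bb u (s - π s) with hγ
    obtain ⟨q, hqdef⟩ : ∃ q : V, q = -(s - π s) + γ • p := ⟨_, rfl⟩
    have hqW₂ : q ∈ W₂ := by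
      rw [hqdef]
      exact W₂.add_mem (W₂.neg_mem (hUW₂ (hπsub s (hHle12 hsH)))) (W₂.smul_mem _ hpW₂)
    have hqperp : q ∈ LinearMap.BilinForm.orthogonal Bb U₃ := by
      refine (hmemperp _ _).2 fun n hn => ?_
      rw [hU₃eq] at hn
      obtain ⟨h, hh, w, hw, rfl⟩ := Submodule.mem_sup.1 hn
      obtain ⟨a, rfl⟩ := Submodule.mem_span_singleton.1 hw
      have hBhq : Bb h q = 0 := by
        have hhp : Bb h p = 0 := by rw [hsymm]; exact hHp h hh
        have hhz : Bb h (s - π s) = 0 := by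
          have hd : Bb h (s - π s) = Bb (π h) (s - π s) + Bb (h - π h) (s - π s) := by
            have : h = π h + (h - π h) := by abel
            nth_rewrite 1 [this]
            rw [map_add, LinearMap.add_apply]
          have hd1 : Bb (π h) (s - π s) = 0 := by
            rw [map_sub, hradB h hh, tsB hU₁ts (hπmem h) (hπmem s)]
            ring
          have hd2 : Bb (h - π h) (s - π s) = 0 :=
            tsB hU₂ts (hπsub h (hHle12 hh)) (hπsub s (hHle12 hsH))
          rw [hd, hd1, hd2, add_zero]
        rw [hqdef, map_add, map_neg, map_smul, hhz, hhp, neg_zero, smul_zero, add_zero]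
      have hBuq : Bb u q = 0 := by
        have hup : Bb u p = Bb p u := hsymm u p
        rw [hqdef, map_add, map_neg, map_smul, hup, smul_eq_mul, hγ]
        linear_combination (Bb u (s - π s)) * mul_inv_cancel₀ ht
      have hexp : (Bb (h + a • u)) q = Bb h q + a * Bb u q := by
        rw [map_add, LinearMap.add_apply, map_smul, LinearMap.smul_apply, smul_eq_mul]
      rw [hexp, hBhq, hBuq]
      ring
    have hvsum : s + q = π s + γ • p := by rw [hqdef]; abel
    have hvW₁ : s + q ∈ W₁ := by
      rw [hvsum]
      exact W₁.add_mem (hUW₁ (hπmem s)) (W₁.smul_mem _ hpW₁)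
    have hvsup : s + q ∈ U₃ ⊔ (W₂ ⊓ LinearMap.BilinForm.orthogonal Bb U₃) :=
      Submodule.add_mem _ (Submodule.mem_sup_left (hHleU₃ hsH))
        (Submodule.mem_sup_right ⟨hqW₂, hqperp⟩)
    have hv0 : s + q ≠ 0 := by
      rw [hvsum]
      intro h0
      have hγ0 : γ = 0 := by
        by_contra hγne
        apply hpU₁
        have hpe : p = γ⁻¹ • (-(π s)) := by
          have : γ • p = -(π s) := by
            have h1 : γ • p = -(π s) + (π s + γ • p) := by abel
            rw [h1, h0, add_zero]
          rw [← this, smul_smul, inv_mul_cancel₀ hγne, one_smul]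
        rw [hpe]
        exact U₁.smul_mem _ (U₁.neg_mem (hπmem s))
      rw [hγ0, zero_smul, add_zero] at h0
      exact hs0 (hπinjH s hsH h0)
    rw [Submodule.ne_bot_iff]
    exact ⟨s + q, ⟨hvsup, hvW₁⟩, hv0⟩
  exact ⟨fun h => key3.1 (key1 h), fun h => key2 (key3.2 h)⟩

/-- Let `Q` be a quadratic form with nondegenerate polar form, `m ≥ 2`,
`U₁, U₂, U₃` totally singular subspaces of dimension `m`, `W₁ ⊇ U₁`, `W₂ ⊇ U₂` totally
singular of dimension `m+1` meeting in a line, `U₃` meeting `U₁ + U₂` in dimension `m−1`,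
with `U₁, U₂` opposite and `U₃` opposite both, and `U₃` not collinear with the point
`W₁ ∩ W₂`.  Then the image of `W₂` under the upper projectivity `U₂ ⋏ U₃ ⋏ U₁` equals `W₁`
(i.e. `(U₃ + (W₂ ∩ U₃^⊥)) ∩ W₁ ≠ 0`) if and only if `m` is even. -/
theorem upper_projectivity_image_iff_even
    {K V : Type*} [Field K] [AddCommGroup V] [Module K V]
    (Q : QuadraticForm K V)
    (hnd : ∀ v : V, (∀ w : V, QuadraticMap.polar (⇑Q) v w = 0) → v = 0)
    (m : ℕ) (hm : 2 ≤ m)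
    (U₁ U₂ U₃ W₁ W₂ : Submodule K V)
    (hU₁ts : IsTotallySingular Q U₁) (hU₂ts : IsTotallySingular Q U₂)
    (hU₃ts : IsTotallySingular Q U₃)
    (hW₁ts : IsTotallySingular Q W₁) (hW₂ts : IsTotallySingular Q W₂)
    (hU₁ : Module.finrank K U₁ = m) (hU₂ : Module.finrank K U₂ = m)
    (hU₃ : Module.finrank K U₃ = m)
    (hW₁ : Module.finrank K W₁ = m + 1) (hW₂ : Module.finrank K W₂ = m + 1)
    (hUW₁ : U₁ ≤ W₁) (hUW₂ : U₂ ≤ W₂)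
    (hmeet : Module.finrank K ↥(W₁ ⊓ W₂) = 1)
    (hU₃meet : Module.finrank K ↥(U₃ ⊓ (U₁ ⊔ U₂)) = m - 1)
    (hopp12 : U₁ ⊓ polarPerp Q U₂ = ⊥)
    (hopp31 : U₃ ⊓ polarPerp Q U₁ = ⊥)
    (hopp32 : U₃ ⊓ polarPerp Q U₂ = ⊥)
    (hnotcoll : ¬ U₃ ≤ polarPerp Q (W₁ ⊓ W₂)) :
    (U₃ ⊔ (W₂ ⊓ polarPerp Q U₃)) ⊓ W₁ ≠ ⊥ ↔ Even m :=
  upper_projectivity_image_iff_even' Q hnd m hm U₁ U₂ U₃ W₁ W₂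
    hU₁ts hU₂ts hU₃ts hW₁ts hW₂ts hU₁ hU₂ hU₃ hW₁ hW₂ hUW₁ hUW₂ hmeet hU₃meet
    hopp12 hopp31 hopp32 hnotcoll
end

section
/- Let K be a field, V a K-vector space, and Q : V → K a quadratic form whose polar form B is nondegenerate. Let m be an even natural number with m ≥ 2, and let U and U' be totally singular subspaces of V of dimension m that are opposite, i.e., U ∩ U'^⊥ = {0}. Then there exists a totally singular subspace U'' of dimension m contained in U + U' that is opposite both U and U': U'' ∩ U^⊥ = {0} and U'' ∩ U'^⊥ = {0}. (Inside the hyperbolic space U + U' of even Witt index m, any two opposite maximal totally singular subspaces admit a common opposite.) -/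
section Aux

variable {K V : Type*} [Field K] [AddCommGroup V] [Module K V]

theorem mem_polarPerp_iff (Q : QuadraticForm K V) (S : Submodule K V) (v : V) :
    v ∈ polarPerp Q S ↔ ∀ s ∈ S, QuadraticMap.polar (⇑Q) s v = 0 :=
  Iff.rfl

/-- On a totally singular subspace the polar form vanishes. -/
theorem polar_eq_zero_of_isTotallySingular {Q : QuadraticForm K V} {S : Submodule K V}
    (hS : IsTotallySingular Q S) {x y : V} (hx : x ∈ S) (hy : y ∈ S) :
    QuadraticMap.polar (⇑Q) x y = 0 := by
  unfold QuadraticMap.polar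
  rw [hS _ (S.add_mem hx hy), hS _ hx, hS _ hy]
  ring

theorem le_polarPerp_self_of_isTotallySingular {Q : QuadraticForm K V} {S : Submodule K V}
    (hS : IsTotallySingular Q S) : S ≤ polarPerp Q S := by
  intro v hv s hs
  exact polar_eq_zero_of_isTotallySingular hS hs hv

end Aux

set_option maxHeartbeats 1000000 in
/-- Let `Q` be a quadratic form with nondegenerate polar form and let
`U, U'` be opposite totally singular subspaces of even dimension `m ≥ 2`.  Then inside the
hyperbolic space `U + U'` there exists a totally singular subspace `U''` of dimension `m`
opposite both `U` and `U'`. -/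
theorem common_opposite_in_hyperbolic_space_of_even_rank
    {K V : Type*} [Field K] [AddCommGroup V] [Module K V]
    (Q : QuadraticForm K V)
    (hnd : ∀ v : V, (∀ w : V, QuadraticMap.polar (⇑Q) v w = 0) → v = 0)
    (m : ℕ) (hm : 2 ≤ m) (hmeven : Even m)
    (U U' : Submodule K V)
    (hUts : IsTotallySingular Q U) (hU'ts : IsTotallySingular Q U')
    (hU : Module.finrank K U = m) (hU' : Module.finrank K U' = m)
    (hopp : U ⊓ polarPerp Q U' = ⊥) :
    ∃ U'' : Submodule K V,
      U'' ≤ U ⊔ U' ∧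
      Module.finrank K U'' = m ∧
      IsTotallySingular Q U'' ∧
      U'' ⊓ polarPerp Q U = ⊥ ∧
      U'' ⊓ polarPerp Q U' = ⊥ := by
  classical
  obtain ⟨k, hk⟩ := hmeven
  haveI : FiniteDimensional K U := FiniteDimensional.of_finrank_pos (by rw [hU]; omega)
  haveI : FiniteDimensional K U' := FiniteDimensional.of_finrank_pos (by rw [hU']; omega)
  set B : LinearMap.BilinForm K V := QuadraticMap.polarBilin Q with hBdef
  -- the pairing `U → Dual U'`
  set ψ : U →ₗ[K] Module.Dual K U' := (B.compl₂ U'.subtype) ∘ₗ U.subtype with hψdef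
  have hψapp : ∀ (u : U) (w : U'), ψ u w = QuadraticMap.polar (⇑Q) (u : V) (w : V) := by
    intro u w; rfl
  have hψinj : Function.Injective ψ := by
    rw [← LinearMap.ker_eq_bot]
    rw [Submodule.eq_bot_iff]
    intro u hu
    have hu0 : (u : V) ∈ U ⊓ polarPerp Q U' := by
      refine ⟨u.2, ?_⟩
      intro s hs
      have h1 : ψ u ⟨s, hs⟩ = 0 := by rw [LinearMap.mem_ker.mp hu]; rfl
      rw [hψapp] at h1
      show QuadraticMap.polar (⇑Q) s (u : V) = 0
      rw [QuadraticMap.polar_comm]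
      exact h1
    rw [hopp] at hu0
    exact Subtype.ext hu0
  have hdim : Module.finrank K U = Module.finrank K (Module.Dual K U') := by
    rw [hU, Subspace.dual_finrank_eq, hU']
  set eψ : U ≃ₗ[K] Module.Dual K U' := ψ.linearEquivOfInjective hψinj hdim with heψ
  -- bases
  set f : Module.Basis (Fin k ⊕ Fin k) K U' :=
    (Module.finBasisOfFinrankEq K U' (by rw [hU', hk])).reindex finSumFinEquiv.symm with hf
  set e : Module.Basis (Fin k ⊕ Fin k) K U := f.dualBasis.map eψ.symm with he
  have hψe : ∀ i, ψ (e i) = f.dualBasis i := by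
    intro i
    have h1 : e i = eψ.symm (f.dualBasis i) := by rw [he, Module.Basis.map_apply]
    rw [h1]
    have h2 : ψ (eψ.symm (f.dualBasis i)) = eψ (eψ.symm (f.dualBasis i)) := rfl
    rw [h2, eψ.apply_symm_apply]
  have hef : ∀ i j, QuadraticMap.polar (⇑Q) (e i : V) (f j : V) = if j = i then 1 else 0 := by
    intro i j
    have h1 := congrArg (fun φ => φ (f j)) (hψe i)
    rw [hψapp] at h1
    rw [h1, Module.Basis.dualBasis_apply_self]
  have hQe : ∀ i, Q (e i : V) = 0 := fun i => hUts _ (e i).2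
  have hQf : ∀ i, Q (f i : V) = 0 := fun i => hU'ts _ (f i).2
  have hee : ∀ i j, QuadraticMap.polar (⇑Q) (e i : V) (e j : V) = 0 := fun i j =>
    polar_eq_zero_of_isTotallySingular hUts (e i).2 (e j).2
  have hff : ∀ i j, QuadraticMap.polar (⇑Q) (f i : V) (f j : V) = 0 := fun i j =>
    polar_eq_zero_of_isTotallySingular hU'ts (f i).2 (f j).2
  -- the involution, the sign and the family g
  set σ : Fin k ⊕ Fin k → Fin k ⊕ Fin k := Sum.elim Sum.inr Sum.inl with hσ
  set ε : Fin k ⊕ Fin k → K := Sum.elim (fun _ => (1 : K)) (fun _ => (-1 : K)) with hε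
  set g : Fin k ⊕ Fin k → V := fun i => (e i : V) + ε i • (f (σ i) : V) with hg
  have hσne : ∀ i, σ i ≠ i := by rintro (a | a) <;> simp [hσ]
  have hQg : ∀ i, Q (g i) = 0 := by
    intro i
    rw [hg]
    rw [QuadraticMap.map_add (⇑Q) (e i : V) (ε i • (f (σ i) : V))]
    rw [QuadraticMap.map_smul, QuadraticMap.polar_smul_right, hQe, hQf, hef]
    rw [if_neg (hσne i)]
    simp
  have hgg : ∀ i j, QuadraticMap.polar (⇑Q) (g i) (g j) = 0 := by
    intro i j
    rw [hg]
    simp only [QuadraticMap.polar_add_left, QuadraticMap.polar_add_right,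
      QuadraticMap.polar_smul_left, QuadraticMap.polar_smul_right]
    rw [hee, hff]
    rw [hef]
    rw [QuadraticMap.polar_comm (⇑Q) ((f (σ i) : V)) (e j : V), hef]
    rcases i with a | a <;> rcases j with b | b
    · simp [hσ, hε]
    · by_cases hab : a = b
      · subst hab; simp [hσ, hε]
      · simp [hσ, hε, hab, Ne.symm hab]
    · by_cases hab : a = b
      · subst hab; simp [hσ, hε]
      · simp [hσ, hε, hab, Ne.symm hab]
    · simp [hσ, hε]
  -- the candidate subspace
  set W : Submodule K V := Submodule.span K (Set.range g) with hW
  have hgW : ∀ i, g i ∈ W := fun i => Submodule.subset_span ⟨i, rfl⟩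
  have hWperp : ∀ j, ∀ w ∈ W, QuadraticMap.polar (⇑Q) (g j) w = 0 := by
    intro j
    have hle : W ≤ LinearMap.ker (B (g j)) := by
      rw [hW, Submodule.span_le]
      rintro _ ⟨i, rfl⟩
      exact hgg j i
    intro w hw
    exact hle hw
  have hWW : ∀ x ∈ W, ∀ y ∈ W, QuadraticMap.polar (⇑Q) x y = 0 := by
    intro x hx y hy
    have hle : W ≤ LinearMap.ker (B x) := by
      rw [hW, Submodule.span_le]
      rintro _ ⟨i, rfl⟩
      show B x (g i) = 0
      show QuadraticMap.polar (⇑Q) x (g i) = 0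
      rw [QuadraticMap.polar_comm]
      exact hWperp i x hx
    exact hle hy
  have hWts : IsTotallySingular Q W := by
    intro v hv
    induction hv using Submodule.span_induction with
    | mem x hx => obtain ⟨i, rfl⟩ := hx; exact hQg i
    | zero => simp
    | add x y hx hy ihx ihy =>
        rw [QuadraticMap.map_add (⇑Q) x y, ihx, ihy,
          hWW x (Submodule.span_le.mpr (fun _ h => Submodule.subset_span h) hx) y
            (Submodule.span_le.mpr (fun _ h => Submodule.subset_span h) hy)]
        ring
    | smul a x hx ihx =>
        rw [QuadraticMap.map_smul, ihx]
        simp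
  -- U ⊓ U' = ⊥
  have hUU' : U ⊓ U' = ⊥ := by
    rw [eq_bot_iff, ← hopp]
    exact inf_le_inf_left U (le_polarPerp_self_of_isTotallySingular hU'ts)
  -- linear independence of g
  have hgind : LinearIndependent K g := by
    rw [Fintype.linearIndependent_iff]
    intro c hc
    have hsum : (∑ i, c i • (e i : V)) + (∑ i, (c i * ε i) • (f (σ i) : V)) = 0 := by
      rw [← hc, ← Finset.sum_add_distrib]
      refine Finset.sum_congr rfl fun i _ => ?_
      rw [hg, smul_add, mul_smul]
    have hx : (∑ i, c i • (e i : V)) ∈ U :=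
      Submodule.sum_mem _ fun i _ => U.smul_mem _ (e i).2
    have hy : (∑ i, (c i * ε i) • (f (σ i) : V)) ∈ U' :=
      Submodule.sum_mem _ fun i _ => U'.smul_mem _ (f (σ i)).2
    have hx0 : (∑ i, c i • (e i : V)) = 0 := by
      have hmem : (∑ i, c i • (e i : V)) ∈ U ⊓ U' := by
        refine ⟨hx, ?_⟩
        have hneg : (∑ i, c i • (e i : V)) = -(∑ i, (c i * ε i) • (f (σ i) : V)) := by
          rw [eq_neg_iff_add_eq_zero]; exact hsum
        rw [hneg]; exact U'.neg_mem hy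
      rw [hUU'] at hmem
      exact hmem
    have hx0' : (∑ i, c i • e i) = (0 : U) := by
      apply Subtype.ext
      push_cast
      exact hx0
    exact fun i => Fintype.linearIndependent_iff.mp e.linearIndependent c hx0' i
  have hWrank : Module.finrank K W = m := by
    rw [hW, finrank_span_eq_card hgind]
    simp [hk]
  have hWle : W ≤ U ⊔ U' := by
    rw [hW, Submodule.span_le]
    rintro _ ⟨i, rfl⟩
    exact Submodule.add_mem _ (Submodule.mem_sup_left (e i).2)
      (Submodule.mem_sup_right (U'.smul_mem _ (f (σ i)).2))
  -- pairings with g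
  have hfg : ∀ j i, QuadraticMap.polar (⇑Q) (f j : V) (g i) = if j = i then 1 else 0 := by
    intro j i
    rw [hg]
    simp only [QuadraticMap.polar_add_right, QuadraticMap.polar_smul_right]
    rw [hff, QuadraticMap.polar_comm, hef]
    simp
  have heg : ∀ j i, QuadraticMap.polar (⇑Q) (e j : V) (g i) = if i = σ j then ε i else 0 := by
    intro j i
    rw [hg]
    simp only [QuadraticMap.polar_add_right, QuadraticMap.polar_smul_right]
    rw [hee, hef]
    rcases i with a | a <;> rcases j with b | b <;>
      simp [hσ, hε, eq_comm]
  have hεne : ∀ i, ε i ≠ 0 := by rintro (a | a) <;> simp [hε]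
  have hσσ : ∀ i, σ (σ i) = i := by rintro (a | a) <;> simp [hσ]
  -- expansion of the polar pairing against a sum
  have hexp : ∀ (x : V) (c : Fin k ⊕ Fin k → K),
      QuadraticMap.polar (⇑Q) x (∑ i, c i • g i)
        = ∑ i, c i • QuadraticMap.polar (⇑Q) x (g i) := by
    intro x c
    show B x (∑ i, c i • g i) = _
    rw [map_sum]
    exact Finset.sum_congr rfl fun i _ => by rw [map_smul]; rfl
  -- W is opposite U'
  have hbotU' : W ⊓ polarPerp Q U' = ⊥ := by
    rw [eq_bot_iff]
    rintro v ⟨hv1, hv2⟩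
    rw [hW] at hv1
    rw [Submodule.mem_bot]
    obtain ⟨c, rfl⟩ := (Submodule.mem_span_range_iff_exists_fun K).mp hv1
    have hc : ∀ j, c j = 0 := by
      intro j
      have h0 : QuadraticMap.polar (⇑Q) (f j : V) (∑ i, c i • g i) = 0 := hv2 _ (f j).2
      rw [hexp] at h0
      simp only [hfg, smul_eq_mul, mul_ite, mul_one, mul_zero, Finset.sum_ite_eq,
        Finset.mem_univ, if_true] at h0
      exact h0
    simp [hc]
  -- W is opposite U
  have hbotU : W ⊓ polarPerp Q U = ⊥ := by
    rw [eq_bot_iff]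
    rintro v ⟨hv1, hv2⟩
    rw [hW] at hv1
    rw [Submodule.mem_bot]
    obtain ⟨c, rfl⟩ := (Submodule.mem_span_range_iff_exists_fun K).mp hv1
    have hc : ∀ j, c (σ j) = 0 := by
      intro j
      have h0 : QuadraticMap.polar (⇑Q) (e j : V) (∑ i, c i • g i) = 0 := hv2 _ (e j).2
      rw [hexp] at h0
      simp only [heg, smul_eq_mul, mul_ite, mul_zero, Finset.sum_ite_eq',
        Finset.mem_univ, if_true] at h0
      rcases mul_eq_zero.mp h0 with h | h
      · exact h
      · exact absurd h (hεne _)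
    have hc' : ∀ j, c j = 0 := fun j => by
      have := hc (σ j); rwa [hσσ] at this
    simp [hc']
  exact ⟨W, hWle, hWrank, hWts, hbotU, hbotU'⟩
end
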